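/- 0 is an eigenvalue of the matrix D+B with eigenvector e (the all-ones vector); the kernel of D+B is one-dimensional, spanned by e; and every complex eigenvalue λ ≠ 0 of D+B satisfies Re λ < 0. -/

import Mathlib

open Matrix Finset

/-- The diagonal matrix of outflows: `D i i = -∑_{j ≠ i} B i j`. -/
noncomputable def Dmat {n : ℕ} (B : Matrix (Fin n) (Fin n) ℝ) : Matrix (Fin n) (Fin n) ℝ :=
  Matrix.diagonal fun i => -∑ j ∈ Finset.univ.erase i, B i j

/-- Strong connectivity of the directed graph with an edge `i → j` whenever `B i j > 0`. -/
def StronglyConnected {n : ℕ} (B : Matrix (Fin n) (Fin n) ℝ) : Prop :=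
  ∀ i j : Fin n, Relation.ReflTransGen (fun a b => 0 < B a b) i j

lemma dmat_mulVec_apply {n : ℕ} (B : Matrix (Fin n) (Fin n) ℝ) (v : Fin n → ℝ) (i : Fin n) :
    ((Dmat B + B) *ᵥ v) i
      = (-∑ j ∈ Finset.univ.erase i, B i j) * v i + ∑ j, B i j * v j := by
  rw [Matrix.add_mulVec]
  simp only [Pi.add_apply, Dmat, Matrix.mulVec_diagonal]
  congr 1

lemma sum_eq_aux {n : ℕ} (B : Matrix (Fin n) (Fin n) ℝ) (hdiag : ∀ i, B i i = 0)
    (v : Fin n → ℝ) (i : Fin n) :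
    ∑ j, B i j * v j = ∑ j ∈ Finset.univ.erase i, B i j * v j := by
  rw [← Finset.sum_erase_add _ _ (Finset.mem_univ i), hdiag, zero_mul, add_zero]

/-- 0 is an eigenvalue of `D + B` with eigenvector `e` (the all-ones vector), the kernel of
`D + B` is one-dimensional and spanned by `e`, and every complex eigenvalue `λ ≠ 0` of `D + B`
satisfies `Re λ < 0`. -/
theorem stmt0 {n : ℕ} (hn : 1 ≤ n) (B : Matrix (Fin n) (Fin n) ℝ)
    (hB : ∀ i j, 0 ≤ B i j) (hdiag : ∀ i, B i i = 0)
    (hconn : StronglyConnected B) :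
    (Dmat B + B) *ᵥ (fun _ => (1 : ℝ)) = 0 ∧
    (∀ v : Fin n → ℝ, (Dmat B + B) *ᵥ v = 0 → ∃ c : ℝ, v = c • (fun _ => (1 : ℝ))) ∧
    (∀ (μ : ℂ) (v : Fin n → ℂ), v ≠ 0 →
      ((Dmat B + B).map (Complex.ofReal)) *ᵥ v = μ • v → μ ≠ 0 → μ.re < 0) := by
  have hne : Nonempty (Fin n) := ⟨⟨0, hn⟩⟩
  refine ⟨?_, ?_, ?_⟩
  · funext i
    rw [dmat_mulVec_apply, sum_eq_aux B hdiag]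
    simp
  · intro v hv
    obtain ⟨i0, -, hmax⟩ := Finset.exists_max_image Finset.univ v Finset.univ_nonempty
    refine ⟨v i0, ?_⟩
    have key : ∀ b : Fin n, Relation.ReflTransGen (fun a b => 0 < B a b) i0 b → v b = v i0 := by
      intro b hb
      induction hb with
      | refl => rfl
      | tail hab hedge ih =>
        rename_i a b'
        have heq : (-∑ j ∈ Finset.univ.erase a, B a j) * v a + ∑ j, B a j * v j = 0 := by
          rw [← dmat_mulVec_apply, hv]; rfl
        rw [sum_eq_aux B hdiag] at heq
        have heq2 : ∑ j ∈ Finset.univ.erase a, B a j * (v j - v a) = 0 := by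
          simp only [mul_sub]
          rw [Finset.sum_sub_distrib, ← Finset.sum_mul]
          linear_combination heq
        have hnonpos : ∀ j ∈ Finset.univ.erase a, B a j * (v j - v a) ≤ 0 := by
          intro j _
          have h1 := hmax j (Finset.mem_univ j)
          have hva : v a = v i0 := ih
          have h2 : v j - v a ≤ 0 := by rw [hva]; linarith
          exact mul_nonpos_of_nonneg_of_nonpos (hB a j) h2
        have hzero := (Finset.sum_eq_zero_iff_of_nonpos hnonpos).mp heq2
        have hbne : b' ≠ a := by
          intro h; rw [h, hdiag] at hedge; exact lt_irrefl _ hedge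
        have h3 := hzero b' (Finset.mem_erase.mpr ⟨hbne, Finset.mem_univ b'⟩)
        have hvb : v b' = v a := by
          rcases mul_eq_zero.mp h3 with h | h
          · exact absurd h (ne_of_gt hedge)
          · linarith [sub_eq_zero.mp h]
        rw [hvb, ih]
    funext j
    have := key j (hconn i0 j)
    simp [this]
  · intro μ v hv heig hμ
    obtain ⟨i0, -, hmax⟩ := Finset.exists_max_image Finset.univ (fun i => ‖v i‖)
      Finset.univ_nonempty
    have hM : 0 < ‖v i0‖ := by
      by_contra h
      push_neg at h
      apply hv
      funext k
      have hk := hmax k (Finset.mem_univ k)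
      have h0 : ‖v k‖ = 0 := le_antisymm (le_trans hk h) (norm_nonneg _)
      simpa using norm_eq_zero.mp h0
    set r : ℝ := ∑ j ∈ Finset.univ.erase i0, B i0 j with hr
    have hr0 : 0 ≤ r := Finset.sum_nonneg fun j _ => hB i0 j
    have heq : ((-r : ℝ) : ℂ) * v i0 + ∑ j, (B i0 j : ℂ) * v j = μ * v i0 := by
      have h0 := congrFun heig i0
      simp only [Matrix.mulVec, dotProduct, Pi.smul_apply, smul_eq_mul,
        Matrix.map_apply, Matrix.add_apply, Complex.ofReal_add, add_mul] at h0
      rw [Finset.sum_add_distrib] at h0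
      have hdsum : ∑ x, ((Dmat B i0 x : ℝ) : ℂ) * v x = ((-r : ℝ) : ℂ) * v i0 := by
        rw [Finset.sum_eq_single i0]
        · simp [Dmat, Matrix.diagonal_apply_eq, hr]
        · intro b _ hb
          simp [Dmat, Matrix.diagonal_apply_ne _ (Ne.symm hb)]
        · intro h; exact absurd (Finset.mem_univ i0) h
      rw [hdsum] at h0
      exact h0
    have heq2 : (μ + (r : ℂ)) * v i0 = ∑ j, (B i0 j : ℂ) * v j := by
      have h1 : (μ + (r : ℂ)) * v i0 = μ * v i0 - ((-r : ℝ) : ℂ) * v i0 := by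
        push_cast; ring
      rw [h1, ← heq]; ring
    have habs : ‖μ + (r : ℂ)‖ * ‖v i0‖ ≤ r * ‖v i0‖ := by
      calc ‖μ + (r : ℂ)‖ * ‖v i0‖
          = ‖(μ + (r : ℂ)) * v i0‖ := (norm_mul _ _).symm
        _ = ‖∑ j, (B i0 j : ℂ) * v j‖ := by rw [heq2]
        _ ≤ ∑ j, ‖(B i0 j : ℂ) * v j‖ := norm_sum_le _ _
        _ = ∑ j, B i0 j * ‖v j‖ := by
            refine Finset.sum_congr rfl fun j _ => ?_
            rw [norm_mul, Complex.norm_real, Real.norm_of_nonneg (hB i0 j)]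
        _ ≤ ∑ j, B i0 j * ‖v i0‖ := by
            refine Finset.sum_le_sum fun j _ => ?_
            exact mul_le_mul_of_nonneg_left (hmax j (Finset.mem_univ j)) (hB i0 j)
        _ = (∑ j, B i0 j) * ‖v i0‖ := by rw [Finset.sum_mul]
        _ = r * ‖v i0‖ := by
            congr 1
            rw [hr, ← Finset.sum_erase_add _ _ (Finset.mem_univ i0), hdiag, add_zero]
    have habs2 : ‖μ + (r : ℂ)‖ ≤ r :=
      le_of_mul_le_mul_right habs hM
    have hsq : (μ.re + r) ^ 2 + μ.im ^ 2 ≤ r ^ 2 := by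
      have h1 : ‖μ + (r : ℂ)‖ ^ 2 ≤ r ^ 2 := by
        nlinarith [norm_nonneg (μ + (r : ℂ))]
      rw [Complex.sq_norm, Complex.normSq_apply] at h1
      simp only [Complex.add_re, Complex.ofReal_re, Complex.add_im, Complex.ofReal_im,
        add_zero] at h1
      nlinarith [h1]
    by_contra h
    push_neg at h
    have hre : μ.re = 0 := by nlinarith
    have him : μ.im = 0 := by nlinarith
    exact hμ (Complex.ext hre him)
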